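/- The Lebesgue measure of the set {(u,v) ∈ ℝ² : exp u ≤ exp v + 1 ∧ exp v ≤ exp u + 1 ∧ 1 ≤ exp u + exp v} equals π²/2. -/

import Mathlib

open Real MeasureTheory Set

private lemma amoeba_slice (u : ℝ) (hu : u ≠ 0) :
    {v : ℝ | exp u ≤ exp v + 1 ∧ exp v ≤ exp u + 1 ∧ 1 ≤ exp u + exp v}
      = Icc (log |exp u - 1|) (log (exp u + 1)) := by
  have h0 : (0:ℝ) < |exp u - 1| := by
    rw [abs_pos, sub_ne_zero]
    exact fun h => hu (by simpa using (congrArg log h.symm).symm)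
  ext v
  simp only [mem_setOf_eq, mem_Icc]
  rw [log_le_iff_le_exp h0, le_log_iff_exp_le (by positivity), abs_sub_le_iff]
  constructor
  · rintro ⟨h1, h2, h3⟩
    exact ⟨⟨by linarith, by linarith⟩, h2⟩
  · rintro ⟨⟨h1, h2⟩, h3⟩
    exact ⟨by linarith, h3, by linarith⟩

private lemma amoeba_slice_series (u : ℝ) (hu : u ≠ 0) :
    HasSum (fun m : ℕ => 2 * (1 / (2 * (m:ℝ) + 1)) * exp (-((2 * (m:ℝ) + 1) * |u|)))
      (log (exp u + 1) - log |exp u - 1|) := by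
  set x := exp (-|u|) with hx
  have hx0 : 0 < x := exp_pos _
  have hx1 : x < 1 := by
    rw [hx, exp_lt_one_iff]
    simpa using abs_pos.mpr hu
  have habs : |x| < 1 := by rwa [abs_of_pos hx0]
  have h := hasSum_log_sub_log_of_abs_lt_one habs
  have hpow : ∀ m : ℕ, x ^ (2 * m + 1) = exp (-((2 * (m:ℝ) + 1) * |u|)) := by
    intro m
    rw [hx, ← exp_nat_mul]
    congr 1
    push_cast
    ring
  have heq : log (1 + x) - log (1 - x) = log (exp u + 1) - log |exp u - 1| := by
    rcases lt_or_gt_of_ne hu with h1 | h1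
    · have : |u| = -u := abs_of_neg h1
      rw [hx, this, neg_neg]
      have hlt : exp u < 1 := by rwa [exp_lt_one_iff]
      rw [abs_of_neg (by linarith : exp u - 1 < 0)]
      ring_nf
    · have : |u| = u := abs_of_pos h1
      rw [hx, this]
      have hgt : 1 < exp u := by rwa [one_lt_exp_iff]
      rw [abs_of_pos (by linarith : (0:ℝ) < exp u - 1)]
      have e1 : exp u + 1 = exp u * (1 + exp (-u)) := by
        rw [mul_add, ← exp_add]; simp
      have e2 : exp u - 1 = exp u * (1 - exp (-u)) := by
        rw [mul_sub, ← exp_add]; simp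
      rw [e1, e2, log_mul (exp_ne_zero u) (by positivity),
        log_mul (exp_ne_zero u)
          (by nlinarith [exp_lt_one_iff.mpr (neg_neg_iff_pos.mpr h1), exp_pos (-u)])]
      ring
  rw [← heq]
  refine h.congr_fun fun m => ?_
  rw [hpow]

private lemma amoeba_integrable_exp_abs {k : ℝ} (hk : 0 < k) :
    Integrable (fun u : ℝ => exp (-(k * |u|))) := by
  have h1 : IntegrableOn (fun u : ℝ => exp (-(k * |u|))) (Ioi 0) := by
    refine (exp_neg_integrableOn_Ioi 0 hk).congr_fun (fun x hx => ?_) measurableSet_Ioi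
    rw [abs_of_pos hx]
    ring_nf
  have h2 : IntegrableOn (fun u : ℝ => exp (-(k * |u|))) (Iic 0) := by
    rw [← Measure.map_neg_eq_self (volume : Measure ℝ)]
    have m : MeasurableEmbedding fun x : ℝ => -x := (Homeomorph.neg ℝ).measurableEmbedding
    rw [m.integrableOn_map_iff]
    simp only [Function.comp_def, abs_neg, neg_preimage, neg_Iic, neg_zero]
    exact (integrableOn_Ici_iff_integrableOn_Ioi).mpr h1
  rw [← integrableOn_univ, ← Iic_union_Ioi (a := (0:ℝ))]
  exact h2.union h1

private lemma amoeba_integral_exp_abs {k : ℝ} (hk : 0 < k) :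
    ∫ u : ℝ, exp (-(k * |u|)) = 2 / k := by
  rw [integral_comp_abs (f := fun x => exp (-(k * x)))]
  rw [show (fun x : ℝ => exp (-(k * x))) = (fun x : ℝ => (fun y => exp (-y)) (k * x)) from rfl,
    integral_comp_mul_left_Ioi (fun y => exp (-y)) 0 hk, mul_zero, integral_exp_neg_Ioi_zero,
    smul_eq_mul, mul_one]
  ring

private lemma amoeba_odd_sum :
    HasSum (fun m : ℕ => 4 / (2 * (m:ℝ) + 1) ^ 2) (π ^ 2 / 2) := by
  set f : ℕ → ℝ := fun n => 1 / (n:ℝ) ^ 2 with hf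
  have basel : HasSum f (π ^ 2 / 6) := hasSum_zeta_two
  have heven : HasSum (fun k : ℕ => f (2 * k)) (π ^ 2 / 24) := by
    have h := basel.mul_left (1/4)
    have e : (π:ℝ) ^ 2 / 24 = 1/4 * (π ^ 2 / 6) := by ring
    rw [e]
    refine h.congr_fun fun k => ?_
    simp only [hf]
    push_cast
    rw [div_mul_div_comm]
    congr 1 <;> ring
  have hinj : Function.Injective (fun k : ℕ => 2 * k + 1) := fun a b h => by
    simpa using h
  have hodd_sum : Summable (fun k : ℕ => f (2 * k + 1)) :=
    basel.summable.comp_injective hinj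
  have hodd : HasSum (fun k : ℕ => f (2 * k + 1)) (π ^ 2 / 8) := by
    have h := HasSum.even_add_odd heven hodd_sum.hasSum
    have h2 := basel.unique h
    have hval : (∑' k : ℕ, f (2 * k + 1)) = π ^ 2 / 8 := by linarith
    rw [← hval]
    exact hodd_sum.hasSum
  have h4 := hodd.mul_left 4
  have e2 : (π:ℝ) ^ 2 / 2 = 4 * (π ^ 2 / 8) := by ring
  rw [e2]
  refine h4.congr_fun fun k => ?_
  simp only [hf]
  push_cast
  rw [mul_one_div]

/-- The area of the amoeba of the line `x + y = 1` in `(ℂ*)²` equals `π²/2`. -/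
theorem area_amoeba_of_line :
    volume {p : ℝ × ℝ | exp p.1 ≤ exp p.2 + 1 ∧ exp p.2 ≤ exp p.1 + 1 ∧ 1 ≤ exp p.1 + exp p.2}
      = ENNReal.ofReal (π ^ 2 / 2) := by
  set S := {p : ℝ × ℝ | exp p.1 ≤ exp p.2 + 1 ∧ exp p.2 ≤ exp p.1 + 1 ∧ 1 ≤ exp p.1 + exp p.2}
    with hSdef
  have hS : MeasurableSet S := by
    refine IsClosed.measurableSet ?_
    have h1 : Continuous fun p : ℝ × ℝ => exp p.1 := by fun_prop
    have h2 : Continuous fun p : ℝ × ℝ => exp p.2 := by fun_prop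
    have : S = {p : ℝ × ℝ | exp p.1 ≤ exp p.2 + 1} ∩
        ({p : ℝ × ℝ | exp p.2 ≤ exp p.1 + 1} ∩ {p : ℝ × ℝ | 1 ≤ exp p.1 + exp p.2}) := rfl
    rw [this]
    exact (isClosed_le h1 (h2.add continuous_const)).inter
      ((isClosed_le h2 (h1.add continuous_const)).inter
        (isClosed_le continuous_const (h1.add h2)))
  have hk : ∀ m : ℕ, (0:ℝ) < 2 * (m:ℝ) + 1 := fun m => by positivity
  rw [show (volume : Measure (ℝ × ℝ)) = (volume : Measure ℝ).prod (volume : Measure ℝ) from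
    Measure.volume_eq_prod ℝ ℝ, Measure.prod_apply hS]
  have key : ∀ᵐ u : ℝ, volume (Prod.mk u ⁻¹' S)
      = ∑' m : ℕ, ENNReal.ofReal (2 * (1 / (2 * (m:ℝ) + 1)) * exp (-((2 * (m:ℝ) + 1) * |u|))) := by
    filter_upwards [compl_mem_ae_iff.mpr (measure_singleton (0:ℝ))] with u hu
    have hu0 : u ≠ 0 := by simpa using hu
    have hpre : Prod.mk u ⁻¹' S
        = {v : ℝ | exp u ≤ exp v + 1 ∧ exp v ≤ exp u + 1 ∧ 1 ≤ exp u + exp v} := rfl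
    rw [hpre, amoeba_slice u hu0, Real.volume_Icc]
    have hs := amoeba_slice_series u hu0
    rw [← hs.tsum_eq]
    exact ENNReal.ofReal_tsum_of_nonneg (fun m => by positivity) hs.summable
  rw [lintegral_congr_ae key]
  rw [lintegral_tsum (fun m => (Measurable.ennreal_ofReal (by fun_prop)).aemeasurable)]
  have hterm : ∀ m : ℕ,
      ∫⁻ u : ℝ, ENNReal.ofReal (2 * (1 / (2 * (m:ℝ) + 1)) * exp (-((2 * (m:ℝ) + 1) * |u|)))
        = ENNReal.ofReal (4 / (2 * (m:ℝ) + 1) ^ 2) := by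
    intro m
    have hint : Integrable (fun u : ℝ =>
        2 * (1 / (2 * (m:ℝ) + 1)) * exp (-((2 * (m:ℝ) + 1) * |u|))) :=
      (amoeba_integrable_exp_abs (hk m)).const_mul _
    rw [← ofReal_integral_eq_lintegral_ofReal hint
      (Filter.Eventually.of_forall fun u => by positivity)]
    rw [integral_const_mul, amoeba_integral_exp_abs (hk m)]
    congr 1
    field_simp
    ring
  rw [tsum_congr hterm]
  rw [← ENNReal.ofReal_tsum_of_nonneg (fun m => by positivity) amoeba_odd_sum.summable,
    amoeba_odd_sum.tsum_eq]
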